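/- Let r_1, ..., r_n be real numbers linearly independent over the rationals. Define P_0 = {1} and P_j = P_{j-1} ∪ (r_j + P_{j-1}) for 1 ≤ j ≤ n. Then the difference set P_n - P_n = {a - a' : a, a' ∈ P_n} has exactly 3^n elements. -/

import Mathlib

open Pointwise

theorem stmt_3 (n : ℕ) (r : Fin n → ℝ)
    (hindep : ∀ x : Fin n → ℤ, (∑ i, (x i : ℝ) * r i) = 0 → x = 0)
    (P : ℕ → Finset ℝ) (hP0 : P 0 = {1})
    (hPstep : ∀ j : Fin n, P (j.1 + 1) = P j.1 ∪ (P j.1).image (fun a => r j + a)) :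
    (P n - P n).card = 3 ^ n := by
  suffices h : ∀ m, m ≤ n →
      ((∀ d ∈ P m - P m, ∃ x : Fin n → ℤ, (∀ i : Fin n, m ≤ i.1 → x i = 0) ∧
        d = ∑ i, (x i : ℝ) * r i) ∧ (P m - P m).card = 3 ^ m) from (h n le_rfl).2
  intro m
  induction m with
  | zero =>
    intro _
    rw [hP0]
    constructor
    · intro d hd
      rw [Finset.singleton_sub_singleton] at hd
      simp only [Finset.mem_singleton] at hd
      refine ⟨0, fun i _ => rfl, ?_⟩
      simp [hd]
    · rw [Finset.singleton_sub_singleton]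
      simp
  | succ m ih =>
    intro hm1
    obtain ⟨hInv, hcard⟩ := ih (Nat.le_of_succ_le hm1)
    set j : Fin n := ⟨m, hm1⟩ with hj
    have hstep := hPstep j
    set D := P m - P m with hD
    set e : Fin n → ℤ := Pi.single j 1 with he
    have hsingle : ∑ i, ((e i : ℤ) : ℝ) * r i = r j := by
      rw [Finset.sum_eq_single j]
      · simp [he]
      · intro i _ hij
        rw [he, Pi.single_eq_of_ne hij]
        simp
      · simp
    -- key non-equality lemma
    have key : ∀ (c : ℤ), c ≠ 0 → ∀ d1 ∈ D, ∀ d2 ∈ D, d1 + (c : ℝ) * r j ≠ d2 := by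
      intro c hc d1 hd1 d2 hd2 heq
      obtain ⟨x1, hx1z, hx1⟩ := hInv d1 hd1
      obtain ⟨x2, hx2z, hx2⟩ := hInv d2 hd2
      set y : Fin n → ℤ := x2 - x1 - c • e with hy
      have hsum : ∑ i, (y i : ℝ) * r i = 0 := by
        have hterm : ∀ i ∈ Finset.univ, (y i : ℝ) * r i =
            (x2 i : ℝ) * r i - (x1 i : ℝ) * r i
              - (c : ℝ) * ((e i : ℝ) * r i) := by
          intro i _
          simp only [hy, Pi.sub_apply, Pi.smul_apply, smul_eq_mul]
          push_cast
          ring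
        rw [Finset.sum_congr rfl hterm, Finset.sum_sub_distrib, Finset.sum_sub_distrib,
          ← Finset.mul_sum, hsingle, ← hx1, ← hx2]
        linarith
      have := hindep y hsum
      have hyj : y j = 0 := by rw [this]; rfl
      have h1 : x1 j = 0 := hx1z j (le_refl m)
      have h2 : x2 j = 0 := hx2z j (le_refl m)
      simp only [hy, Pi.sub_apply, Pi.smul_apply, he, Pi.single_eq_same, smul_eq_mul, mul_one,
        h1, h2] at hyj
      omega
    have hunion : P (m + 1) - P (m + 1) =
        D ∪ D.image (fun a => r j + a) ∪ D.image (fun a => -r j + a) := by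
      ext z
      have hstep' : P (m + 1) = P m ∪ (P m).image (fun a => r j + a) := hstep
      simp only [hstep', Finset.mem_sub, Finset.mem_union, Finset.mem_image, hD]
      constructor
      · rintro ⟨a, ha, b, hb, rfl⟩
        rcases ha with ha | ⟨a', ha', rfl⟩ <;> rcases hb with hb | ⟨b', hb', rfl⟩
        · exact Or.inl (Or.inl ⟨a, ha, b, hb, rfl⟩)
        · exact Or.inr ⟨a - b', ⟨a, ha, b', hb', rfl⟩, by ring⟩
        · exact Or.inl (Or.inr ⟨a' - b, ⟨a', ha', b, hb, rfl⟩, by ring⟩)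
        · exact Or.inl (Or.inl ⟨a', ha', b', hb', by ring⟩)
      · rintro ((⟨a, ha, b, hb, rfl⟩ | ⟨d, ⟨a, ha, b, hb, rfl⟩, rfl⟩) |
          ⟨d, ⟨a, ha, b, hb, rfl⟩, rfl⟩)
        · exact ⟨a, Or.inl ha, b, Or.inl hb, rfl⟩
        · exact ⟨r j + a, Or.inr ⟨a, ha, rfl⟩, b, Or.inl hb, by ring⟩
        · exact ⟨a, Or.inl ha, r j + b, Or.inr ⟨b, hb, rfl⟩, by ring⟩
    have hdisj1 : Disjoint D (D.image (fun a => r j + a)) := by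
      rw [Finset.disjoint_left]
      rintro z hz hz'
      simp only [Finset.mem_image] at hz'
      obtain ⟨d, hd, rfl⟩ := hz'
      exact key 1 one_ne_zero d hd (r j + d) hz (by push_cast; ring)
    have hdisj2 : Disjoint (D ∪ D.image (fun a => r j + a)) (D.image (fun a => -r j + a)) := by
      rw [Finset.disjoint_left]
      rintro z hz hz'
      simp only [Finset.mem_image] at hz'
      obtain ⟨d, hd, rfl⟩ := hz'
      rcases Finset.mem_union.mp hz with hz | hz
      · exact key 1 one_ne_zero (-r j + d) hz d hd (by push_cast; ring)
      · simp only [Finset.mem_image] at hz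
        obtain ⟨d', hd', heq⟩ := hz
        have h2 : d' + ((2:ℤ):ℝ) * r j = d := by push_cast; linarith
        exact key 2 (by norm_num) d' hd' d hd h2
    have hinj : Function.Injective (fun a : ℝ => r j + a) := fun a b h => by
      simpa using h
    have hinj' : Function.Injective (fun a : ℝ => -r j + a) := fun a b h => by
      simpa using h
    constructor
    · intro d hd
      rw [hunion] at hd
      rcases Finset.mem_union.mp hd with hd | hd
      · rcases Finset.mem_union.mp hd with hd | hd
        · obtain ⟨x, hxz, hx⟩ := hInv d hd
          exact ⟨x, fun i hi => hxz i (by omega), hx⟩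
        · simp only [Finset.mem_image] at hd
          obtain ⟨d', hd', rfl⟩ := hd
          obtain ⟨x, hxz, hx⟩ := hInv d' hd'
          refine ⟨x + e, ?_, ?_⟩
          · intro i hi
            have hij : i ≠ j := by
              intro h; rw [h] at hi; simp [hj] at hi
            simp [hxz i (by omega), he, Pi.single_eq_of_ne hij]
          · have hterm : ∀ i ∈ Finset.univ, (((x + e) i : ℤ) : ℝ) * r i =
                (x i : ℝ) * r i + (e i : ℝ) * r i := by
              intro i _
              simp only [Pi.add_apply]
              push_cast
              ring
            rw [Finset.sum_congr rfl hterm, Finset.sum_add_distrib, hsingle, ← hx]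
            ring
      · simp only [Finset.mem_image] at hd
        obtain ⟨d', hd', rfl⟩ := hd
        obtain ⟨x, hxz, hx⟩ := hInv d' hd'
        refine ⟨x - e, ?_, ?_⟩
        · intro i hi
          have hij : i ≠ j := by
            intro h; rw [h] at hi; simp [hj] at hi
          simp [hxz i (by omega), he, Pi.single_eq_of_ne hij]
        · have hterm : ∀ i ∈ Finset.univ, (((x - e) i : ℤ) : ℝ) * r i =
              (x i : ℝ) * r i - (e i : ℝ) * r i := by
            intro i _
            simp only [Pi.sub_apply]
            push_cast
            ring
          rw [Finset.sum_congr rfl hterm, Finset.sum_sub_distrib, hsingle, ← hx]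
          ring
    · rw [hunion, Finset.card_union_of_disjoint hdisj2,
        Finset.card_union_of_disjoint hdisj1,
        Finset.card_image_of_injective _ hinj, Finset.card_image_of_injective _ hinj',
        hcard]
      ring
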